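/- Let y ∈ I(S_n) and w ∈ S_n. Then w ∈ A(y) := A(1,y) if and only if the following hold: (a) if (a,b) ∈ Cyc(y) then w(b) ≤ w(a); (b) if (a,b) ∈ Cyc(y) then there is no integer t with a < t < b such that w(b) < w(t) < w(a); (c) if (a,b), (a',b') ∈ Cyc(y) are such that a < a' and b < b', then w(b) ≤ w(a) < w(b') ≤ w(a'). -/

import Mathlib

open Equiv
open scoped Classical

/-- The simple transposition `s_{i+1} = (i+1, i+2)` of `S_n` (zero-indexed: it swaps the
elements `i` and `i + 1` of `Fin n`), or the identity if `i + 1 ≥ n`. -/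
def sP (n : ℕ) (i : ℕ) : Equiv.Perm (Fin n) :=
  if h : i + 1 < n then Equiv.swap ⟨i, Nat.lt_of_succ_lt h⟩ ⟨i + 1, h⟩ else 1

/-- The Coxeter length of a permutation: its number of inversions. -/
noncomputable def lenP {n : ℕ} (w : Equiv.Perm (Fin n)) : ℕ :=
  (Finset.univ.filter (fun p : Fin n × Fin n => p.1 < p.2 ∧ w p.2 < w p.1)).card

/-- One step of the conjugation action of the `0`-Hecke monoid on involutions:
`x ⋉ s = (s⁻¹ ∘ x) ∘ s` where `∘` is the Demazure product. -/
noncomputable def iStep {n : ℕ} (x : Equiv.Perm (Fin n)) (i : ℕ) : Equiv.Perm (Fin n) :=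
  if lenP (x * sP n i) < lenP x then x
  else if sP n i * x = x * sP n i then x * sP n i
  else sP n i * x * sP n i

/-- Iterated action `((x ⋉ s_{i₁}) ⋉ s_{i₂}) ⋉ ⋯ ⋉ s_{iₖ}` of a word on an involution. -/
noncomputable def iWord {n : ℕ} (x : Equiv.Perm (Fin n)) (l : List ℕ) : Equiv.Perm (Fin n) :=
  l.foldl iStep x

/-- Product of the word `(s_{i₁}, …, s_{iₖ})` in `S_n`. -/
def wordProdP (n : ℕ) (l : List ℕ) : Equiv.Perm (Fin n) := (l.map (sP n)).prod

/-- A word is reduced if its length equals the length of its product. -/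
noncomputable def ReducedWordP (n : ℕ) (l : List ℕ) : Prop :=
  lenP (wordProdP n l) = l.length

/-- The Hecke atoms `B(x, y) = {w ∈ S_n : x ⋉ w = y}`:  `x ⋉ w` is computed by applying any
reduced word of `w` letter by letter. -/
noncomputable def HeckeP (n : ℕ) (x y : Equiv.Perm (Fin n)) : Set (Equiv.Perm (Fin n)) :=
  {w | ∃ l : List ℕ, wordProdP n l = w ∧ ReducedWordP n l ∧ iWord x l = y}

/-- The atoms `A(x, y)`: minimal-length elements of `B(x, y)`. -/
noncomputable def AtomsP (n : ℕ) (x y : Equiv.Perm (Fin n)) : Set (Equiv.Perm (Fin n)) :=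
  {w ∈ HeckeP n x y | ∀ v ∈ HeckeP n x y, lenP w ≤ lenP v}

/-- The involution words `R̂(x, y)` of `y` relative to `x`. -/
noncomputable def InvWordsP (n : ℕ) (x y : Equiv.Perm (Fin n)) : Set (List ℕ) :=
  {l | iWord x l = y ∧ ∀ l' : List ℕ, iWord x l' = y → l.length ≤ l'.length}

/-- The fixed-point-free involution `w_fpf = s_1 s_3 s_5 ⋯ s_{2n-1} ∈ S_{2n}`. -/
def wfpfP (n : ℕ) : Equiv.Perm (Fin (2 * n)) :=
  ((List.range n).map (fun i => sP (2 * n) (2 * i))).prod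

namespace CJW
variable {n : ℕ}

lemma sP_out (i : ℕ) (h : ¬ i + 1 < n) : sP n i = 1 := by simp [sP, h]

section basic
variable (i : ℕ) (h : i + 1 < n)
include h

lemma sval (a : Fin n) :
    (sP n i a).val = if a.val = i then i + 1 else if a.val = i + 1 then i else a.val := by
  rw [sP, dif_pos h, Equiv.swap_apply_def]
  rcases a with ⟨v, hv⟩
  by_cases h1 : v = i <;> by_cases h2 : v = i + 1 <;>
    simp [h1, h2, Fin.ext_iff] <;> omega

lemma s_invol (a : Fin n) : sP n i (sP n i a) = a := by
  rw [sP, dif_pos h]; exact Equiv.swap_apply_self _ _ a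

lemma s_mul_self : sP n i * sP n i = 1 := by
  rw [sP, dif_pos h]; exact Equiv.swap_mul_self _ _

lemma s_inv : (sP n i)⁻¹ = sP n i := by
  rw [sP, dif_pos h]; exact Equiv.swap_inv _ _

lemma s_p : sP n i ⟨i, by omega⟩ = ⟨i + 1, h⟩ := by
  rw [sP, dif_pos h]; exact Equiv.swap_apply_left _ _

lemma s_q : sP n i ⟨i + 1, h⟩ = ⟨i, by omega⟩ := by
  rw [sP, dif_pos h]; exact Equiv.swap_apply_right _ _

lemma s_other (a : Fin n) (h1 : a.val ≠ i) (h2 : a.val ≠ i + 1) : sP n i a = a := by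
  apply Fin.ext; rw [sval i h]; simp [h1, h2]

lemma oflip {A B : Fin n} (hAB : A < B) :
    sP n i A < sP n i B ∨ (A = (⟨i, by omega⟩ : Fin n) ∧ B = ⟨i + 1, h⟩) := by
  rw [Fin.lt_def] at hAB ⊢
  rw [sval i h, sval i h]
  by_cases h1 : A.val = i ∧ B.val = i + 1
  · right; exact ⟨Fin.ext h1.1, Fin.ext h1.2⟩
  · left; split_ifs <;> omega

lemma olt {A B : Fin n} (hAB : A < B)
    (hne : ¬(A = (⟨i, by omega⟩ : Fin n) ∧ B = ⟨i + 1, h⟩)) :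
    sP n i A < sP n i B := by
  rcases oflip i h hAB with h1 | h1
  · exact h1
  · exact absurd h1 hne

lemma ole {A B : Fin n} (hAB : A ≤ B)
    (hne : ¬(A = (⟨i, by omega⟩ : Fin n) ∧ B = ⟨i + 1, h⟩)) :
    sP n i A ≤ sP n i B := by
  rcases eq_or_lt_of_le hAB with rfl | hlt
  · exact le_refl _
  · exact le_of_lt (olt i h hlt hne)

/-- main length lemma: multiplying by an ascent adds one inversion -/
lemma lenS_asc (w : Perm (Fin n)) (hasc : w ⟨i, by omega⟩ < w ⟨i + 1, h⟩) :
    lenP (w * sP n i) = lenP w + 1 := by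
  set p : Fin n := ⟨i, by omega⟩ with hp
  set q : Fin n := ⟨i + 1, h⟩ with hq
  have hpq : p < q := by rw [Fin.lt_def]; simp [hp, hq]
  have hs : ∀ a : Fin n, sP n i (sP n i a) = a := s_invol i h
  have hsp : sP n i p = q := s_p i h
  have hsq : sP n i q = p := s_q i h
  set S := Finset.univ.filter
    (fun pr : Fin n × Fin n => pr.1 < pr.2 ∧ (w * sP n i) pr.2 < (w * sP n i) pr.1) with hS
  set T := Finset.univ.filter
    (fun pr : Fin n × Fin n => pr.1 < pr.2 ∧ w pr.2 < w pr.1) with hT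
  have hmem : (p, q) ∈ S := by
    simp only [hS, Finset.mem_filter, Finset.mem_univ, true_and]
    refine ⟨hpq, ?_⟩
    simp only [Equiv.Perm.mul_apply, hsp, hsq]
    exact hasc
  have hcard : (S.erase (p, q)).card = T.card := by
    apply Finset.card_bij' (fun pr _ => (sP n i pr.1, sP n i pr.2))
      (fun pr _ => (sP n i pr.1, sP n i pr.2))
    · intro pr hpr
      rw [Finset.mem_erase] at hpr
      obtain ⟨hne, hin⟩ := hpr
      simp only [hS, Finset.mem_filter, Finset.mem_univ, true_and] at hin
      simp only [Equiv.Perm.mul_apply] at hin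
      simp only [hT, Finset.mem_filter, Finset.mem_univ, true_and]
      refine ⟨olt i h hin.1 ?_, hin.2⟩
      intro hc
      exact hne (by rw [Prod.ext_iff]; exact ⟨hc.1, hc.2⟩)
    · intro pr hpr
      simp only [hT, Finset.mem_filter, Finset.mem_univ, true_and] at hpr
      rw [Finset.mem_erase]
      constructor
      · intro hc
        rw [Prod.ext_iff] at hc
        have h1 : pr.1 = sP n i p := by
          have := hc.1; simp only at this; rw [← this, hs]
        have h2 : pr.2 = sP n i q := by
          have := hc.2; simp only at this; rw [← this, hs]
        rw [hsp] at h1; rw [hsq] at h2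
        have := hpr.1
        rw [h1, h2] at this
        exact absurd this (not_lt_of_gt hpq)
      · simp only [hS, Finset.mem_filter, Finset.mem_univ, true_and]
        simp only [Equiv.Perm.mul_apply, hs]
        refine ⟨olt i h hpr.1 ?_, hpr.2⟩
        intro hc
        rw [hc.1, hc.2] at hpr
        exact absurd hpr.2 (not_lt_of_gt hasc)
    · intro pr _; simp [hs]
    · intro pr _; simp [hs]
  have : S.card = T.card + 1 := by
    rw [← hcard, Finset.card_erase_of_mem hmem]
    have : 0 < S.card := Finset.card_pos.mpr ⟨(p, q), hmem⟩
    omega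
  exact this

lemma lenS_desc (w : Perm (Fin n)) (hd : w ⟨i + 1, h⟩ < w ⟨i, by omega⟩) :
    lenP w = lenP (w * sP n i) + 1 := by
  have key := lenS_asc i h (w * sP n i) ?_
  · rw [mul_assoc, s_mul_self i h, mul_one] at key
    exact key
  · simp only [Equiv.Perm.mul_apply, s_p i h, s_q i h]
    exact hd

end basic

lemma lenP_one : lenP (1 : Perm (Fin n)) = 0 := by
  simp only [lenP, Finset.card_eq_zero]
  rw [Finset.filter_eq_empty_iff]
  rintro ⟨a, b⟩ _
  simp only [Perm.one_apply]
  rintro ⟨h1, h2⟩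
  exact absurd h1 (not_lt_of_gt h2)

lemma lenP_inv (w : Perm (Fin n)) : lenP w⁻¹ = lenP w := by
  simp only [lenP]
  apply Finset.card_bij' (fun pr _ => (w⁻¹ pr.2, w⁻¹ pr.1)) (fun pr _ => (w pr.2, w pr.1))
  · intro pr hpr
    simp only [Finset.mem_filter, Finset.mem_univ, true_and] at hpr ⊢
    simpa using hpr.symm.imp id id
  · intro pr hpr
    simp only [Finset.mem_filter, Finset.mem_univ, true_and] at hpr ⊢
    simpa using hpr.symm.imp id id
  · intro pr _; simp
  · intro pr _; simp

lemma lenS_le (i : ℕ) (w : Perm (Fin n)) : lenP (w * sP n i) ≤ lenP w + 1 := by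
  by_cases h : i + 1 < n
  · rcases lt_trichotomy (w ⟨i, by omega⟩) (w ⟨i + 1, h⟩) with h1 | h1 | h1
    · rw [lenS_asc i h w h1]
    · exact absurd (w.injective h1) (by simp [Fin.ext_iff])
    · rw [lenS_desc i h w h1]; omega
  · rw [sP_out i h, mul_one]; omega

lemma strictMono_eq_one (w : Perm (Fin n)) (hmono : StrictMono ⇑w) : w = 1 := by
  have hle : ∀ v : Perm (Fin n), StrictMono ⇑v → ∀ a, a ≤ v a := by
    intro v hv a
    have : (Finset.Iio a).card ≤ (Finset.Iio (v a)).card := by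
      apply Finset.card_le_card_of_injOn v
      · intro x hx
        simp only [Finset.mem_coe, Finset.mem_Iio] at hx ⊢
        exact hv hx
      · exact fun x _ y _ hxy => v.injective hxy
    rw [Fin.card_Iio, Fin.card_Iio] at this
    exact Fin.le_def.mpr this
  have hinv : StrictMono ⇑(w⁻¹ : Perm (Fin n)) := by
    intro a b hab
    rcases lt_trichotomy (w⁻¹ a) (w⁻¹ b) with h1 | h1 | h1
    · exact h1
    · exact absurd ((w⁻¹).injective h1 ▸ hab) (lt_irrefl _)
    · have := hmono h1
      simp only [Perm.inv_def, Equiv.apply_symm_apply] at this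
      exact absurd hab (not_lt_of_gt this)
  apply Equiv.ext
  intro a
  have h1 := hle w hmono a
  have h2 := hle _ hinv (w a)
  simp only [Perm.inv_def, Equiv.symm_apply_apply] at h2
  simp only [Perm.one_apply]
  exact le_antisymm h2 h1

lemma strictMono_of_no_descent (w : Perm (Fin n))
    (hnd : ∀ (i : ℕ) (h : i + 1 < n), w ⟨i, by omega⟩ < w ⟨i + 1, h⟩) : StrictMono ⇑w := by
  have key : ∀ (d : ℕ) (a b : Fin n), b.val = a.val + d + 1 → w a < w b := by
    intro d
    induction d with
    | zero =>
      intro a b hb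
      have hbn : a.val + 1 < n := by omega
      have hb' : b = ⟨a.val + 1, hbn⟩ := Fin.ext (by simp only [Fin.val_mk]; omega)
      rw [hb']
      have := hnd a.val hbn
      simpa only [Fin.eta] using this
    | succ d ih =>
      intro a b hb
      have hcn : a.val + d + 1 < n := by omega
      have hc : w a < w ⟨a.val + d + 1, hcn⟩ := ih a _ rfl
      refine lt_trans hc ?_
      have hbn : a.val + d + 1 + 1 < n := by omega
      have hb' : b = ⟨a.val + d + 1 + 1, hbn⟩ := Fin.ext (by simp only [Fin.val_mk]; omega)
      rw [hb']
      exact hnd (a.val + d + 1) hbn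
  intro a b hab
  rw [Fin.lt_def] at hab
  exact key (b.val - a.val - 1) a b (by omega)

lemma exists_descent (w : Perm (Fin n)) (hw : w ≠ 1) :
    ∃ (i : ℕ) (h : i + 1 < n), w ⟨i + 1, h⟩ < w ⟨i, by omega⟩ := by
  by_contra hc
  push_neg at hc
  apply hw
  apply strictMono_eq_one
  apply strictMono_of_no_descent
  intro i h
  have h1 := hc i h
  rcases lt_trichotomy (w ⟨i, by omega⟩) (w ⟨i + 1, h⟩) with h2 | h2 | h2
  · exact h2
  · exact absurd (w.injective h2) (by simp [Fin.ext_iff])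
  · exact absurd h2 (not_lt_of_ge h1)

noncomputable def cP (x : Perm (Fin n)) : ℕ := (Finset.univ.filter fun a => a < x a).card

noncomputable def mP (x : Perm (Fin n)) : ℕ := lenP x + cP x

lemma cP_one : cP (1 : Perm (Fin n)) = 0 := by
  simp [cP, Finset.filter_eq_empty_iff]

lemma mP_one : mP (1 : Perm (Fin n)) = 0 := by simp [mP, lenP_one, cP_one]

lemma iStep_out (x : Perm (Fin n)) (i : ℕ) (h : ¬ i + 1 < n) : iStep x i = x := by
  rw [iStep, sP_out i h, mul_one, if_neg (lt_irrefl _), one_mul, if_pos rfl]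

section step
variable (i : ℕ) (h : i + 1 < n) (x : Perm (Fin n))
include h

lemma iStep_desc (hd : x ⟨i + 1, h⟩ < x ⟨i, by omega⟩) : iStep x i = x := by
  have := lenS_desc i h x hd
  rw [iStep, if_pos (by omega)]

lemma comm_of_fixed (hp : x ⟨i, by omega⟩ = ⟨i, by omega⟩) (hq : x ⟨i + 1, h⟩ = ⟨i + 1, h⟩)
    (hy : x * x = 1) : sP n i * x = x * sP n i := by
  have xx : ∀ a, x (x a) = a := by
    intro a
    have := congrArg (fun z : Perm (Fin n) => z a) hy
    simpa [Perm.mul_apply] using this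
  apply Equiv.ext
  intro a
  simp only [Perm.mul_apply]
  by_cases h1 : a = (⟨i, by omega⟩ : Fin n)
  · rw [h1, hp, s_p i h, hq]
  · by_cases h2 : a = (⟨i + 1, h⟩ : Fin n)
    · rw [h2, hq, s_q i h, hp]
    · have hv1 : a.val ≠ i := fun hc => h1 (Fin.ext hc)
      have hv2 : a.val ≠ i + 1 := fun hc => h2 (Fin.ext hc)
      rw [s_other i h a hv1 hv2]
      have hx1 : x a ≠ (⟨i, by omega⟩ : Fin n) := by
        intro hc
        exact h1 (by rw [← xx a, hc, hp])
      have hx2 : x a ≠ (⟨i + 1, h⟩ : Fin n) := by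
        intro hc
        exact h2 (by rw [← xx a, hc, hq])
      rw [s_other i h (x a) (fun hc => hx1 (Fin.ext hc)) (fun hc => hx2 (Fin.ext hc))]

lemma iStep_comm (hy : x * x = 1) (hp : x ⟨i, by omega⟩ = ⟨i, by omega⟩)
    (hq : x ⟨i + 1, h⟩ = ⟨i + 1, h⟩) :
    iStep x i = x * sP n i ∧ mP (x * sP n i) = mP x + 2 ∧
      (x * sP n i) * (x * sP n i) = 1 := by
  have hasc : x ⟨i, by omega⟩ < x ⟨i + 1, h⟩ := by
    rw [hp, hq]; exact Fin.mk_lt_mk.mpr (by omega)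
  have hlen : lenP (x * sP n i) = lenP x + 1 := lenS_asc i h x hasc
  have comm := comm_of_fixed i h x hp hq hy
  refine ⟨?_, ?_, ?_⟩
  · have hnl : ¬ lenP (x * sP n i) < lenP x := by rw [hlen]; omega
    rw [iStep, if_neg hnl, if_pos comm]
  · have hcP : cP (x * sP n i) = cP x + 1 := by
      have hset : (Finset.univ.filter fun a => a < (x * sP n i) a) =
          insert (⟨i, by omega⟩ : Fin n) (Finset.univ.filter fun a => a < x a) := by
        apply Finset.ext
        intro a
        simp only [Finset.mem_filter, Finset.mem_univ, true_and, Finset.mem_insert]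
        simp only [Perm.mul_apply]
        by_cases h1 : a = (⟨i, by omega⟩ : Fin n)
        · subst h1
          rw [s_p i h, hq]
          simp only [true_or, iff_true]
          exact Fin.mk_lt_mk.mpr (by omega)
        · by_cases h2 : a = (⟨i + 1, h⟩ : Fin n)
          · subst h2
            rw [s_q i h, hp]
            simp only [Fin.mk_lt_mk, Fin.mk.injEq]
            omega
          · rw [s_other i h a (fun hc => h1 (Fin.ext hc)) (fun hc => h2 (Fin.ext hc))]
            simp [h1]
      rw [cP, hset, Finset.card_insert_of_notMem (by simp [hp]), cP]
    simp only [mP, hlen, hcP]; omega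
  · have hkey : sP n i * (x * sP n i) = x := by
      rw [← mul_assoc, comm, mul_assoc, s_mul_self i h, mul_one]
    rw [mul_assoc, hkey, hy]

lemma xpq_facts (hy : x * x = 1) (hasc : x ⟨i, by omega⟩ < x ⟨i + 1, h⟩) :
    x ⟨i, by omega⟩ ≠ (⟨i + 1, h⟩ : Fin n) ∧ x ⟨i + 1, h⟩ ≠ (⟨i, by omega⟩ : Fin n) := by
  have xx : ∀ a, x (x a) = a := by
    intro a
    have := congrArg (fun z : Perm (Fin n) => z a) hy
    simpa [Perm.mul_apply] using this
  constructor
  · intro hc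
    have h2 : x ⟨i + 1, h⟩ = ⟨i, by omega⟩ := by rw [← hc, xx]
    rw [hc, h2] at hasc
    exact absurd hasc (by rw [Fin.lt_def]; simp)
  · intro hc
    have h2 : x ⟨i, by omega⟩ = ⟨i + 1, h⟩ := by rw [← hc, xx]
    rw [hc, h2] at hasc
    exact absurd hasc (by rw [Fin.lt_def]; simp)

lemma iStep_conj (hy : x * x = 1) (hasc : x ⟨i, by omega⟩ < x ⟨i + 1, h⟩)
    (hnf : ¬(x ⟨i, by omega⟩ = (⟨i, by omega⟩ : Fin n) ∧ x ⟨i + 1, h⟩ = (⟨i + 1, h⟩ : Fin n))) :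
    iStep x i = sP n i * x * sP n i ∧ mP (sP n i * x * sP n i) = mP x + 2 ∧
      (sP n i * x * sP n i) * (sP n i * x * sP n i) = 1 := by
  set p : Fin n := ⟨i, by omega⟩ with hp
  set q : Fin n := ⟨i + 1, h⟩ with hq
  obtain ⟨hxpq, hxqp⟩ := xpq_facts i h x hy hasc
  have xx : ∀ a, x (x a) = a := by
    intro a
    have := congrArg (fun z : Perm (Fin n) => z a) hy
    simpa [Perm.mul_apply] using this
  have hxinv : x⁻¹ = x := inv_eq_of_mul_eq_one_right hy
  have hlen1 : lenP (x * sP n i) = lenP x + 1 := lenS_asc i h x hasc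
  have hlen2 : lenP (sP n i * x) = lenP x + 1 := by
    have : (sP n i * x)⁻¹ = x * sP n i := by
      rw [mul_inv_rev, hxinv, s_inv i h]
    rw [← lenP_inv, this, hlen1]
  have hsxasc : (sP n i * x) p < (sP n i * x) q := by
    simp only [Perm.mul_apply]
    exact olt i h hasc hnf
  have hlen3 : lenP (sP n i * x * sP n i) = lenP x + 2 := by
    rw [lenS_asc i h (sP n i * x) hsxasc, hlen2]
  have hncomm : sP n i * x ≠ x * sP n i := by
    intro hc
    have happ : sP n i (x p) = x (sP n i p) := by
      have := congrArg (fun z : Perm (Fin n) => z p) hc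
      simpa [Perm.mul_apply] using this
    rw [s_p i h] at happ
    by_cases h1 : x p = p
    · rw [h1, s_p i h] at happ
      exact hnf ⟨h1, happ.symm⟩
    · have hv1 : (x p).val ≠ i := fun hc' => h1 (Fin.ext (by simpa [hp] using hc'))
      have hv2 : (x p).val ≠ i + 1 := fun hc' => hxpq (Fin.ext (by simpa [hq] using hc'))
      rw [s_other i h (x p) hv1 hv2] at happ
      have := x.injective happ
      exact absurd (congrArg Fin.val this) (by simp [hp, hq])
  have hcP : cP (sP n i * x * sP n i) = cP x := by
    rw [cP, cP]
    apply Finset.card_bij' (fun a _ => sP n i a) (fun a _ => sP n i a)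
    · intro a ha
      simp only [Finset.mem_filter, Finset.mem_univ, true_and] at ha ⊢
      simp only [Perm.mul_apply] at ha ⊢
      have h2 := olt i h ha (by
        rintro ⟨ha1, ha2⟩
        rw [ha1, s_p i h] at ha2
        have e2 := congrArg (sP n i) ha2
        rw [s_invol i h, s_q i h] at e2
        exact hxqp e2)
      rwa [s_invol i h] at h2
    · intro a ha
      simp only [Finset.mem_filter, Finset.mem_univ, true_and] at ha ⊢
      simp only [Perm.mul_apply] at ha ⊢
      rw [s_invol i h]
      exact olt i h ha (by
        rintro ⟨ha1, ha2⟩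
        exact hxpq (ha1 ▸ ha2))
    · intro a _; rw [s_invol i h]
    · intro a _; rw [s_invol i h]
  refine ⟨?_, ?_, ?_⟩
  · have hnl : ¬ lenP (x * sP n i) < lenP x := by rw [hlen1]; omega
    rw [iStep, if_neg hnl, if_neg hncomm]
  · simp only [mP, hlen3, hcP]; omega
  · have e1 : sP n i * x * sP n i * (sP n i * x * sP n i) =
        sP n i * (x * ((sP n i * sP n i) * (x * sP n i))) := by
      simp only [mul_assoc]
    rw [e1, s_mul_self i h, one_mul, ← mul_assoc x x, hy, one_mul, s_mul_self i h]

end step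

lemma iStep_invol_bound (x : Perm (Fin n)) (i : ℕ) (hy : x * x = 1) :
    (iStep x i) * (iStep x i) = 1 ∧ mP (iStep x i) ≤ mP x + 2 := by
  by_cases h : i + 1 < n
  · rcases lt_trichotomy (x ⟨i, by omega⟩) (x ⟨i + 1, h⟩) with h1 | h1 | h1
    · by_cases h2 : x ⟨i, by omega⟩ = (⟨i, by omega⟩ : Fin n) ∧ x ⟨i + 1, h⟩ = (⟨i + 1, h⟩ : Fin n)
      · obtain ⟨e, hm, hi⟩ := iStep_comm i h x hy h2.1 h2.2
        rw [e]; exact ⟨hi, by omega⟩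
      · obtain ⟨e, hm, hi⟩ := iStep_conj i h x hy h1 h2
        rw [e]; exact ⟨hi, by omega⟩
    · exact absurd (x.injective h1) (by simp [Fin.ext_iff])
    · rw [iStep_desc i h x h1]; exact ⟨hy, by omega⟩
  · rw [iStep_out x i h]; exact ⟨hy, by omega⟩

/-- The combinatorial conditions (a), (b), (c). -/
def Conds (w y : Perm (Fin n)) : Prop :=
  (∀ a b : Fin n, a ≤ b → y a = b → w b ≤ w a) ∧
  (∀ a b : Fin n, a ≤ b → y a = b →
     ∀ t : Fin n, a < t → t < b → ¬ (w b < w t ∧ w t < w a)) ∧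
  (∀ a b a' b' : Fin n, a ≤ b → y a = b → a' ≤ b' → y a' = b' → a < a' → b < b' →
     w b ≤ w a ∧ w a < w b' ∧ w b' ≤ w a')

lemma invol_apply {y : Perm (Fin n)} (hy : y * y = 1) : ∀ a, y (y a) = a := by
  intro a
  have := congrArg (fun z : Perm (Fin n) => z a) hy
  simpa [Perm.mul_apply] using this

section transfer
variable (i : ℕ) (h : i + 1 < n) (w y : Perm (Fin n))
include h

lemma descent_forces (hy : y * y = 1) (hc : Conds w y)
    (hdw : w ⟨i + 1, h⟩ < w ⟨i, by omega⟩) : y ⟨i + 1, h⟩ < y ⟨i, by omega⟩ := by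
  set p : Fin n := ⟨i, by omega⟩ with hp
  set q : Fin n := ⟨i + 1, h⟩ with hq
  have vp : p.val = i := rfl
  have vq : q.val = i + 1 := rfl
  have hpq : p < q := Fin.lt_def.mpr (by omega)
  have yy := invol_apply hy
  rcases lt_trichotomy (y p) (y q) with hlt | heq | hgt
  · exfalso
    rcases lt_trichotomy (y p) p with h1 | h1 | h1
    · -- y p < p
      rcases lt_trichotomy (y q) q with h2 | h2 | h2
      · -- y q < q : cycles (y p, p), (y q, q)
        obtain ⟨c1, c2, c3⟩ := hc.2.2 (y p) p (y q) q (le_of_lt h1) (yy p)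
          (le_of_lt h2) (yy q) hlt hpq
        exact absurd (lt_of_le_of_lt c1 c2) (not_lt_of_gt hdw)
      · -- y q = q : cycles (y p, p), (q, q)
        obtain ⟨c1, c2, c3⟩ := hc.2.2 (y p) p q q (le_of_lt h1) (yy p)
          (le_refl q) h2 (lt_trans h1 hpq) hpq
        exact absurd (lt_of_le_of_lt c1 c2) (not_lt_of_gt hdw)
      · -- q < y q : cycles (y p, p), (q, y q)
        obtain ⟨c1, c2, c3⟩ := hc.2.2 (y p) p q (y q) (le_of_lt h1) (yy p)
          (le_of_lt h2) rfl (lt_trans h1 hpq) (lt_trans hpq h2)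
        exact absurd (lt_of_le_of_lt c1 (lt_of_lt_of_le c2 c3)) (not_lt_of_gt hdw)
    · -- y p = p
      rcases lt_trichotomy (y q) q with h2 | h2 | h2
      · -- y q < q, but p = y p < y q < q : positional contradiction
        have u1 := Fin.lt_def.mp hlt
        have u2 := Fin.lt_def.mp h2
        rw [h1] at u1
        omega
      · -- y q = q : cycles (p,p), (q,q)
        obtain ⟨c1, c2, c3⟩ := hc.2.2 p p q q (le_refl p) h1 (le_refl q) h2 hpq hpq
        exact absurd c2 (not_lt_of_gt hdw)
      · -- q < y q : cycles (p,p),(q, y q)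
        obtain ⟨c1, c2, c3⟩ := hc.2.2 p p q (y q) (le_refl p) h1 (le_of_lt h2) rfl
          hpq (lt_trans hpq h2)
        exact absurd (lt_of_lt_of_le c2 c3) (not_lt_of_gt hdw)
    · -- p < y p
      rcases lt_trichotomy (y q) q with h2 | h2 | h2
      · -- y q < q : positional: p < y p < y q < q = p+1
        have u1 := Fin.lt_def.mp hlt
        have u2 := Fin.lt_def.mp h2
        have u3 := Fin.lt_def.mp h1
        omega
      · -- y q = q : p < y p < y q = q : positional
        have u1 := Fin.lt_def.mp hlt
        have u3 := Fin.lt_def.mp h1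
        rw [h2] at u1
        omega
      · -- q < y q : cycles (p, y p), (q, y q)
        obtain ⟨c1, c2, c3⟩ := hc.2.2 p (y p) q (y q) (le_of_lt h1) rfl
          (le_of_lt h2) rfl hpq hlt
        exact absurd (lt_of_lt_of_le c2 c3) (not_lt_of_gt hdw)
  · exact absurd (y.injective heq) (by simp [Fin.ext_iff, hp, hq])
  · exact hgt

lemma cls_comm (hy : y * y = 1) (hyp : y ⟨i, by omega⟩ = ⟨i + 1, h⟩) :
    ∀ A B : Fin n, A ≤ B → (y * sP n i) A = B →
      (A = (⟨i, by omega⟩ : Fin n) ∧ B = (⟨i, by omega⟩ : Fin n)) ∨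
      (A = (⟨i + 1, h⟩ : Fin n) ∧ B = (⟨i + 1, h⟩ : Fin n)) ∨
      (A.val ≠ i ∧ A.val ≠ i + 1 ∧ B.val ≠ i ∧ B.val ≠ i + 1 ∧ y A = B) := by
  set p : Fin n := ⟨i, by omega⟩ with hp
  set q : Fin n := ⟨i + 1, h⟩ with hq
  have yy := invol_apply hy
  have hyq : y q = p := by rw [← hyp, yy]
  intro A B hAB e
  have e' : y (sP n i A) = B := by rw [← e]; rfl
  by_cases a1 : A.val = i
  · have hA : A = p := Fin.ext a1
    rw [hA, s_p i h, hyq] at e'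
    exact Or.inl ⟨hA, e'.symm⟩
  · by_cases a2 : A.val = i + 1
    · have hA : A = q := Fin.ext a2
      rw [hA, s_q i h, hyp] at e'
      exact Or.inr (Or.inl ⟨hA, e'.symm⟩)
    · rw [s_other i h A a1 a2] at e'
      have b1 : B.val ≠ i := by
        intro hb
        have hB : B = p := Fin.ext hb
        rw [hB] at e'
        have : A = y p := by rw [← e', yy]
        rw [hyp] at this
        exact a2 (congrArg Fin.val this)
      have b2 : B.val ≠ i + 1 := by
        intro hb
        have hB : B = q := Fin.ext hb
        rw [hB] at e'
        have : A = y q := by rw [← e', yy]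
        rw [hyq] at this
        exact a1 (congrArg Fin.val this)
      exact Or.inr (Or.inr ⟨a1, a2, b1, b2, e'⟩)

lemma T2 (hy : y * y = 1) (hc : Conds w y)
    (hdw : w ⟨i + 1, h⟩ < w ⟨i, by omega⟩) (hyp : y ⟨i, by omega⟩ = ⟨i + 1, h⟩) :
    Conds (w * sP n i) (y * sP n i) := by
  set p : Fin n := ⟨i, by omega⟩ with hp
  set q : Fin n := ⟨i + 1, h⟩ with hq
  have vp : p.val = i := rfl
  have vq : q.val = i + 1 := rfl
  have hpq : p < q := Fin.lt_def.mpr (by omega)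
  have yy := invol_apply hy
  have hyq : y q = p := by rw [← hyp, yy]
  have cls := cls_comm i h y hy hyp
  have wapp : ∀ A : Fin n, A.val ≠ i → A.val ≠ i + 1 → (w * sP n i) A = w A := by
    intro A h1 h2
    show w (sP n i A) = w A
    rw [s_other i h A h1 h2]
  have wp : (w * sP n i) p = w q := by show w (sP n i p) = w q; rw [s_p i h]
  have wq : (w * sP n i) q = w p := by show w (sP n i q) = w p; rw [s_q i h]
  refine ⟨?_, ?_, ?_⟩
  · -- (a)
    intro A B hAB e
    rcases cls A B hAB e with ⟨hA, hB⟩ | ⟨hA, hB⟩ | ⟨a1, a2, b1, b2, e'⟩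
    · rw [hA, hB]
    · rw [hA, hB]
    · rw [wapp A a1 a2, wapp B b1 b2]
      exact hc.1 A B hAB e'
  · -- (b)
    intro A B hAB e t' h1 h2 hv
    rcases cls A B hAB e with ⟨hA, hB⟩ | ⟨hA, hB⟩ | ⟨a1, a2, b1, b2, e'⟩
    · rw [hA] at h1; rw [hB] at h2
      exact absurd (lt_trans h1 h2) (lt_irrefl _)
    · rw [hA] at h1; rw [hB] at h2
      exact absurd (lt_trans h1 h2) (lt_irrefl _)
    · rw [wapp A a1 a2, wapp B b1 b2] at hv
      have hAv := Fin.lt_def.mp h1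
      have hBv := Fin.lt_def.mp h2
      by_cases t1 : t'.val = i
      · -- t' = p; use t = q
        have ht : t' = p := Fin.ext t1
        rw [ht, wp] at hv
        have hAq : A < q := Fin.lt_def.mpr (by omega)
        have hqB : q < B := Fin.lt_def.mpr (by omega)
        exact hc.2.1 A B hAB e' q hAq hqB hv
      · by_cases t2 : t'.val = i + 1
        · -- t' = q; use t = p
          have ht : t' = q := Fin.ext t2
          rw [ht, wq] at hv
          have hAp : A < p := Fin.lt_def.mpr (by omega)
          have hpB : p < B := Fin.lt_def.mpr (by omega)
          exact hc.2.1 A B hAB e' p hAp hpB hv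
        · rw [wapp t' t1 t2] at hv
          exact hc.2.1 A B hAB e' t' h1 h2 hv
  · -- (c)
    intro A B A' B' hAB e hA'B' e2 h1 h2
    rcases cls A B hAB e with ⟨hA, hB⟩ | ⟨hA, hB⟩ | ⟨a1, a2, b1, b2, e'⟩ <;>
      rcases cls A' B' hA'B' e2 with ⟨hA', hB'⟩ | ⟨hA', hB'⟩ | ⟨a1', a2', b1', b2', e2'⟩
    · rw [hA, hA'] at h1; exact absurd h1 (lt_irrefl _)
    · -- (p,p), (q,q)
      rw [hA, hB, hA', hB', wp, wq]
      exact ⟨le_refl _, hdw, le_refl _⟩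
    · -- (p,p), old
      rw [hA, hB, wp, wapp A' a1' a2', wapp B' b1' b2']
      have u1 := Fin.lt_def.mp h1
      have u2 := Fin.lt_def.mp h2
      rw [hA] at u1; rw [hB] at u2
      have hpA' : p < A' := Fin.lt_def.mpr (by omega)
      have hqB' : q < B' := Fin.lt_def.mpr (by omega)
      obtain ⟨c1, c2, c3⟩ := hc.2.2 p q A' B' (le_of_lt hpq) hyp hA'B' e2' hpA' hqB'
      exact ⟨le_refl _, lt_of_le_of_lt c1 c2, c3⟩
    · rw [hA'] at h1
      have u1 := Fin.lt_def.mp h1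
      rw [hA] at u1
      omega
    · rw [hA, hA'] at h1; exact absurd h1 (lt_irrefl _)
    · -- (q,q), old
      rw [hA, hB, wq, wapp A' a1' a2', wapp B' b1' b2']
      have u1 := Fin.lt_def.mp h1
      have u2 := Fin.lt_def.mp h2
      rw [hA] at u1; rw [hB] at u2
      have hpA' : p < A' := Fin.lt_def.mpr (by omega)
      have hqB' : q < B' := Fin.lt_def.mpr (by omega)
      obtain ⟨c1, c2, c3⟩ := hc.2.2 p q A' B' (le_of_lt hpq) hyp hA'B' e2' hpA' hqB'
      exact ⟨le_refl _, c2, c3⟩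
    · -- old, (p,p)
      rw [hA', hB', wp, wapp A a1 a2, wapp B b1 b2]
      have u1 := Fin.lt_def.mp h1
      have u2 := Fin.lt_def.mp h2
      rw [hA'] at u1; rw [hB'] at u2
      have hBq : B < q := Fin.lt_def.mpr (by omega)
      have hAp : A < p := Fin.lt_def.mpr (by omega)
      obtain ⟨c1, c2, c3⟩ := hc.2.2 A B p q hAB e' (le_of_lt hpq) hyp hAp hBq
      exact ⟨c1, c2, le_refl _⟩
    · -- old, (q,q)
      rw [hA', hB', wq, wapp A a1 a2, wapp B b1 b2]
      have u1 := Fin.lt_def.mp h1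
      have u2 := Fin.lt_def.mp h2
      rw [hA'] at u1; rw [hB'] at u2
      have hAp : A < p := Fin.lt_def.mpr (by omega)
      have hBq : B < q := Fin.lt_def.mpr (by omega)
      obtain ⟨c1, c2, c3⟩ := hc.2.2 A B p q hAB e' (le_of_lt hpq) hyp hAp hBq
      exact ⟨c1, lt_trans c2 hdw, le_refl _⟩
    · -- old, old
      rw [wapp A a1 a2, wapp B b1 b2, wapp A' a1' a2', wapp B' b1' b2']
      exact hc.2.2 A B A' B' hAB e' hA'B' e2' h1 h2

lemma cls_comm' (hy : y * y = 1) (hp1 : y ⟨i, by omega⟩ = ⟨i, by omega⟩)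
    (hq1 : y ⟨i + 1, h⟩ = ⟨i + 1, h⟩) :
    ∀ A B : Fin n, A ≤ B → (y * sP n i) A = B →
      (A = (⟨i, by omega⟩ : Fin n) ∧ B = (⟨i + 1, h⟩ : Fin n)) ∨
      (A.val ≠ i ∧ A.val ≠ i + 1 ∧ B.val ≠ i ∧ B.val ≠ i + 1 ∧ y A = B) := by
  set p : Fin n := ⟨i, by omega⟩ with hp
  set q : Fin n := ⟨i + 1, h⟩ with hq
  have yy := invol_apply hy
  intro A B hAB e
  have e' : y (sP n i A) = B := by rw [← e]; rfl
  by_cases a1 : A.val = i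
  · have hA : A = p := Fin.ext a1
    rw [hA, s_p i h, hq1] at e'
    exact Or.inl ⟨hA, e'.symm⟩
  · by_cases a2 : A.val = i + 1
    · exfalso
      have hA : A = q := Fin.ext a2
      rw [hA, s_q i h, hp1] at e'
      have u := Fin.le_def.mp hAB
      have v2 : B.val = i := (congrArg Fin.val e'.symm : _)
      omega
    · rw [s_other i h A a1 a2] at e'
      have b1 : B.val ≠ i := by
        intro hb
        have hB : B = p := Fin.ext hb
        rw [hB] at e'
        have : A = y p := by rw [← e', yy]
        rw [hp1] at this
        exact a1 (congrArg Fin.val this)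
      have b2 : B.val ≠ i + 1 := by
        intro hb
        have hB : B = q := Fin.ext hb
        rw [hB] at e'
        have : A = y q := by rw [← e', yy]
        rw [hq1] at this
        exact a2 (congrArg Fin.val this)
      exact Or.inr ⟨a1, a2, b1, b2, e'⟩

lemma T2' (hy : y * y = 1) (hc : Conds w y)
    (haw : w ⟨i, by omega⟩ < w ⟨i + 1, h⟩) (hp1 : y ⟨i, by omega⟩ = ⟨i, by omega⟩)
    (hq1 : y ⟨i + 1, h⟩ = ⟨i + 1, h⟩) :
    Conds (w * sP n i) (y * sP n i) := by
  set p : Fin n := ⟨i, by omega⟩ with hp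
  set q : Fin n := ⟨i + 1, h⟩ with hq
  have vp : p.val = i := rfl
  have vq : q.val = i + 1 := rfl
  have hpq : p < q := Fin.lt_def.mpr (by omega)
  have yy := invol_apply hy
  have cls := cls_comm' i h y hy hp1 hq1
  have wapp : ∀ A : Fin n, A.val ≠ i → A.val ≠ i + 1 → (w * sP n i) A = w A := by
    intro A h1 h2
    show w (sP n i A) = w A
    rw [s_other i h A h1 h2]
  have wp : (w * sP n i) p = w q := by show w (sP n i p) = w q; rw [s_p i h]
  have wq : (w * sP n i) q = w p := by show w (sP n i q) = w p; rw [s_q i h]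
  refine ⟨?_, ?_, ?_⟩
  · -- (a)
    intro A B hAB e
    rcases cls A B hAB e with ⟨hA, hB⟩ | ⟨a1, a2, b1, b2, e'⟩
    · rw [hA, hB, wp, wq]
      exact le_of_lt haw
    · rw [wapp A a1 a2, wapp B b1 b2]
      exact hc.1 A B hAB e'
  · -- (b)
    intro A B hAB e t' h1 h2 hv
    rcases cls A B hAB e with ⟨hA, hB⟩ | ⟨a1, a2, b1, b2, e'⟩
    · -- cycle (p,q): no interior point
      rw [hA] at h1; rw [hB] at h2
      have u1 := Fin.lt_def.mp h1
      have u2 := Fin.lt_def.mp h2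
      omega
    · rw [wapp A a1 a2, wapp B b1 b2] at hv
      have hAv := Fin.lt_def.mp h1
      have hBv := Fin.lt_def.mp h2
      by_cases t1 : t'.val = i
      · have ht : t' = p := Fin.ext t1
        rw [ht, wp] at hv
        have hAq : A < q := Fin.lt_def.mpr (by omega)
        have hqB : q < B := Fin.lt_def.mpr (by omega)
        exact hc.2.1 A B hAB e' q hAq hqB hv
      · by_cases t2 : t'.val = i + 1
        · have ht : t' = q := Fin.ext t2
          rw [ht, wq] at hv
          have hAp : A < p := Fin.lt_def.mpr (by omega)
          have hpB : p < B := Fin.lt_def.mpr (by omega)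
          exact hc.2.1 A B hAB e' p hAp hpB hv
        · rw [wapp t' t1 t2] at hv
          exact hc.2.1 A B hAB e' t' h1 h2 hv
  · -- (c)
    intro A B A' B' hAB e hA'B' e2 h1 h2
    rcases cls A B hAB e with ⟨hA, hB⟩ | ⟨a1, a2, b1, b2, e'⟩ <;>
      rcases cls A' B' hA'B' e2 with ⟨hA', hB'⟩ | ⟨a1', a2', b1', b2', e2'⟩
    · rw [hA, hA'] at h1; exact absurd h1 (lt_irrefl _)
    · -- (p,q), old
      rw [hA, hB, wp, wq, wapp A' a1' a2', wapp B' b1' b2']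
      have u1 := Fin.lt_def.mp h1
      have u2 := Fin.lt_def.mp h2
      rw [hA] at u1; rw [hB] at u2
      have hqA' : q < A' := Fin.lt_def.mpr (by omega)
      have hqB' : q < B' := Fin.lt_def.mpr (by omega)
      obtain ⟨c1, c2, c3⟩ := hc.2.2 q q A' B' (le_refl q) hq1 hA'B' e2' hqA' hqB'
      exact ⟨le_of_lt haw, c2, c3⟩
    · -- old, (p,q)
      rw [hA', hB', wp, wq, wapp A a1 a2, wapp B b1 b2]
      have u1 := Fin.lt_def.mp h1
      have u2 := Fin.lt_def.mp h2
      rw [hA'] at u1; rw [hB'] at u2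
      have hAp : A < p := Fin.lt_def.mpr (by omega)
      have hBp : B < p := Fin.lt_def.mpr (by omega)
      obtain ⟨c1, c2, c3⟩ := hc.2.2 A B p p hAB e' (le_refl p) hp1 hAp hBp
      exact ⟨c1, c2, le_of_lt haw⟩
    · -- old, old
      rw [wapp A a1 a2, wapp B b1 b2, wapp A' a1' a2', wapp B' b1' b2']
      exact hc.2.2 A B A' B' hAB e' hA'B' e2' h1 h2

lemma cls_conj (hy : y * y = 1) (hypq : y ⟨i, by omega⟩ ≠ ⟨i + 1, h⟩) :
    ∀ A B : Fin n, A ≤ B → (sP n i * y * sP n i) A = B →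
      y (sP n i A) = sP n i B ∧ sP n i A ≤ sP n i B := by
  set p : Fin n := ⟨i, by omega⟩ with hp
  set q : Fin n := ⟨i + 1, h⟩ with hq
  have yy := invol_apply hy
  have hyqp : y q ≠ p := by
    intro e
    apply hypq
    rw [← e, yy]
  intro A B hAB e
  have e' : sP n i (y (sP n i A)) = B := by rw [← e]; rfl
  have e'' : y (sP n i A) = sP n i B := by
    rw [← e', s_invol i h]
  refine ⟨e'', ole i h hAB ?_⟩
  rintro ⟨hA, hB⟩
  rw [hA, hB, s_p i h] at e''
  rw [s_q i h] at e''
  exact hyqp e''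

lemma T3 (hy : y * y = 1) (hc : Conds w y)
    (hdw : w ⟨i + 1, h⟩ < w ⟨i, by omega⟩) (hdy : y ⟨i + 1, h⟩ < y ⟨i, by omega⟩)
    (hypq : y ⟨i, by omega⟩ ≠ ⟨i + 1, h⟩) :
    Conds (w * sP n i) (sP n i * y * sP n i) := by
  set p : Fin n := ⟨i, by omega⟩ with hp
  set q : Fin n := ⟨i + 1, h⟩ with hq
  have vp : p.val = i := rfl
  have vq : q.val = i + 1 := rfl
  have hpq : p < q := Fin.lt_def.mpr (by omega)
  have yy := invol_apply hy
  have cls := cls_conj i h y hy hypq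
  have wapp : ∀ A : Fin n, (w * sP n i) A = w (sP n i A) := fun A => rfl
  refine ⟨?_, ?_, ?_⟩
  · -- (a)
    intro A B hAB e
    obtain ⟨e1, f1⟩ := cls A B hAB e
    rw [wapp, wapp]
    exact hc.1 _ _ f1 e1
  · -- (b)
    intro A B hAB e t' h1 h2 hv
    obtain ⟨e1, f1⟩ := cls A B hAB e
    rw [wapp, wapp, wapp] at hv
    rcases oflip i h h1 with g1 | ⟨gA, gt⟩
    · rcases oflip i h h2 with g2 | ⟨gt2, gB⟩
      · exact hc.2.1 _ _ f1 e1 _ g1 g2 hv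
      · -- t' = p, B = q : values give w p < w q, contradicting descent
        rw [gt2, gB, s_p i h, s_q i h] at hv
        exact absurd hv.1 (not_lt_of_gt hdw)
    · -- A = p, t' = q : values give w p < w q
      rw [gA, gt, s_p i h, s_q i h] at hv
      exact absurd hv.2 (not_lt_of_gt hdw)
  · -- (c)
    intro A B A' B' hAB e hA'B' e2 h1 h2
    obtain ⟨e1, f1⟩ := cls A B hAB e
    obtain ⟨e1', f1'⟩ := cls A' B' hA'B' e2
    simp only [wapp]
    refine ⟨hc.1 _ _ f1 e1, ?_, hc.1 _ _ f1' e1'⟩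
    rcases oflip i h h1 with g1 | ⟨gA, gA'⟩
    · rcases oflip i h h2 with g2 | ⟨gB, gB'⟩
      · exact (hc.2.2 _ _ _ _ f1 e1 f1' e1' g1 g2).2.1
      · -- B = p, B' = q : cycles (s A, q), (s A', p), with s A < s A' ≤ p
        have e1b : y (sP n i A) = q := by rw [gB, s_p i h] at e1; exact e1
        have f1b' : sP n i A' ≤ p := by rw [gB', s_q i h] at f1'; exact f1'
        rw [gB', s_q i h]
        -- goal : w (s A) < w p
        have hap : sP n i A < p := lt_of_lt_of_le g1 f1b'
        have hapv := Fin.lt_def.mp hap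
        have haq : sP n i A < q := Fin.lt_def.mpr (by omega)
        have nb := hc.2.1 (sP n i A) q (le_of_lt haq) e1b p hap hpq
        have hle : w (sP n i A) ≤ w p := by
          by_contra hcon
          push_neg at hcon
          exact nb ⟨hdw, hcon⟩
        rcases lt_or_eq_of_le hle with hlt | heq
        · exact hlt
        · exact absurd (w.injective heq) (by
            intro ee
            rw [ee] at hapv
            omega)
    · -- A = p, A' = q : cycles (q, s B), (p, s B')
      have e1c : y q = sP n i B := by rw [gA, s_p i h] at e1; exact e1
      have e1c' : y p = sP n i B' := by rw [gA', s_q i h] at e1'; exact e1'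
      have f1c : q ≤ sP n i B := by rw [gA, s_p i h] at f1; exact f1
      rw [gA, s_p i h]
      -- goal : w q < w (s B')
      rcases oflip i h h2 with g2 | ⟨gB, gB'⟩
      · -- s B < s B' genuine
        have hqb' : q < sP n i B' := lt_of_le_of_lt f1c g2
        have hpb' : p < sP n i B' := lt_trans hpq hqb'
        have nb := hc.2.1 p (sP n i B') (le_of_lt hpb') e1c' q hpq hqb'
        have hle : w q ≤ w (sP n i B') := by
          by_contra hcon
          push_neg at hcon
          exact nb ⟨hcon, hdw⟩
        rcases lt_or_eq_of_le hle with hlt | heq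
        · exact hlt
        · exact absurd (w.injective heq) (by
            intro ee
            have := Fin.lt_def.mp hqb'
            rw [ee] at this
            omega)
      · -- B = p, B' = q as well : then y q = q and y p = p, contradicting descent of y
        exfalso
        rw [gB, s_p i h] at e1c
        rw [gB', s_q i h] at e1c'
        rw [e1c, e1c'] at hdy
        have := Fin.lt_def.mp hdy
        omega

lemma T3' (hy : y * y = 1) (hc : Conds w y)
    (haw : w ⟨i, by omega⟩ < w ⟨i + 1, h⟩) (hay : y ⟨i, by omega⟩ < y ⟨i + 1, h⟩)
    (hnf : ¬(y ⟨i, by omega⟩ = (⟨i, by omega⟩ : Fin n) ∧ y ⟨i + 1, h⟩ = (⟨i + 1, h⟩ : Fin n))) :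
    Conds (w * sP n i) (sP n i * y * sP n i) := by
  set p : Fin n := ⟨i, by omega⟩ with hp
  set q : Fin n := ⟨i + 1, h⟩ with hq
  have vp : p.val = i := rfl
  have vq : q.val = i + 1 := rfl
  have hpq : p < q := Fin.lt_def.mpr (by omega)
  have yy := invol_apply hy
  have hypq : y p ≠ q := by
    intro e
    have e2 : y q = p := by rw [← e, yy]
    rw [e, e2] at hay
    have := Fin.lt_def.mp hay
    omega
  have cls := cls_conj i h y hy hypq
  have wapp : ∀ A : Fin n, (w * sP n i) A = w (sP n i A) := fun A => rfl
  refine ⟨?_, ?_, ?_⟩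
  · intro A B hAB e
    obtain ⟨e1, f1⟩ := cls A B hAB e
    rw [wapp, wapp]
    exact hc.1 _ _ f1 e1
  · -- (b)
    intro A B hAB e t' h1 h2 hv
    obtain ⟨e1, f1⟩ := cls A B hAB e
    rw [wapp, wapp, wapp] at hv
    have hABne : sP n i A ≠ sP n i B := by
      intro ee
      have := (sP n i).injective ee
      rw [this] at h1
      exact absurd (lt_trans h1 h2) (lt_irrefl _)
    rcases oflip i h h1 with g1 | ⟨gA, gt⟩
    · rcases oflip i h h2 with g2 | ⟨gt2, gB⟩
      · exact hc.2.1 _ _ f1 e1 _ g1 g2 hv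
      · -- t' = p, B = q : cycle (s A, p) with y (s A) = p
        rw [gt2, gB, s_p i h, s_q i h] at hv
        rw [gB, s_q i h] at e1 f1 hABne
        -- e1 : y (s A) = p, f1 : s A ≤ p, hv : w p < w q ∧ w q < w (s A)
        have hap : sP n i A < p := lt_of_le_of_ne f1 hABne
        have hya : y p = sP n i A := by rw [hp, ← e1, yy]
        rcases lt_trichotomy (y q) q with h2' | h2' | h2'
        · -- y q < q : cycle (y q, q), with s A < y q
          have hayq : sP n i A < y q := by rw [← hya]; exact hay
          obtain ⟨c1, c2, c3⟩ := hc.2.2 (sP n i A) p (y q) q (le_of_lt hap) e1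
            (le_of_lt h2') (yy q) hayq hpq
          exact absurd c2 (not_lt_of_gt hv.2)
        · -- y q = q
          obtain ⟨c1, c2, c3⟩ := hc.2.2 (sP n i A) p q q (le_of_lt hap) e1
            (le_refl q) h2' (lt_trans hap hpq) hpq
          exact absurd c2 (not_lt_of_gt hv.2)
        · -- q < y q : cycle (q, y q)
          obtain ⟨c1, c2, c3⟩ := hc.2.2 (sP n i A) p q (y q) (le_of_lt hap) e1
            (le_of_lt h2') rfl (lt_trans hap hpq) (lt_trans hpq h2')
          exact absurd (lt_of_lt_of_le c2 c3) (not_lt_of_gt hv.2)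
    · -- A = p, t' = q : cycle (q, s B) with y q = s B
      rw [gA, gt, s_p i h, s_q i h] at hv
      rw [gA, s_p i h] at e1 f1 hABne
      -- e1 : y q = s B, f1 : q ≤ s B, hv : w (s B) < w p ∧ w p < w q
      have hqb : q < sP n i B := lt_of_le_of_ne f1 hABne
      have hpb : p < sP n i B := lt_trans hpq hqb
      rcases lt_trichotomy (y p) p with h1' | h1' | h1'
      · -- y p < p : cycle (y p, p)
        obtain ⟨c1, c2, c3⟩ := hc.2.2 (y p) p q (sP n i B) (le_of_lt h1') (yy p)
          (le_of_lt hqb) e1 (lt_trans h1' hpq) hpb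
        exact absurd (lt_of_le_of_lt c1 c2) (not_lt_of_gt hv.1)
      · -- y p = p
        obtain ⟨c1, c2, c3⟩ := hc.2.2 p p q (sP n i B) (le_refl p) h1'
          (le_of_lt hqb) e1 hpq hpb
        exact absurd c2 (not_lt_of_gt hv.1)
      · -- p < y p : cycle (p, y p), and y p < y q = s B
        have hypb : y p < sP n i B := by rw [← e1]; exact hay
        obtain ⟨c1, c2, c3⟩ := hc.2.2 p (y p) q (sP n i B) (le_of_lt h1') rfl
          (le_of_lt hqb) e1 hpq hypb
        exact absurd c2 (not_lt_of_gt hv.1)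
  · -- (c)
    intro A B A' B' hAB e hA'B' e2 h1 h2
    obtain ⟨e1, f1⟩ := cls A B hAB e
    obtain ⟨e1', f1'⟩ := cls A' B' hA'B' e2
    simp only [wapp]
    refine ⟨hc.1 _ _ f1 e1, ?_, hc.1 _ _ f1' e1'⟩
    rcases oflip i h h1 with g1 | ⟨gA, gA'⟩
    · rcases oflip i h h2 with g2 | ⟨gB, gB'⟩
      · exact (hc.2.2 _ _ _ _ f1 e1 f1' e1' g1 g2).2.1
      · -- B = p, B' = q : cycles (s A, q), (s A', p) : contradicts ascent of y
        exfalso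
        have e1b : y (sP n i A) = q := by rw [gB, s_p i h] at e1; exact e1
        have e1b' : y (sP n i A') = p := by rw [gB', s_q i h] at e1'; exact e1'
        have u1 : y p = sP n i A' := by rw [← e1b', yy]
        have u2 : y q = sP n i A := by rw [← e1b, yy]
        rw [u1, u2] at hay
        exact absurd g1 (not_lt_of_gt hay)
    · -- A = p, A' = q
      have e1c : y q = sP n i B := by rw [gA, s_p i h] at e1; exact e1
      have e1c' : y p = sP n i B' := by rw [gA', s_q i h] at e1'; exact e1'
      exfalso
      rcases oflip i h h2 with g2 | ⟨gB, gB'⟩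
      · rw [e1c, e1c'] at hay
        exact absurd g2 (not_lt_of_gt hay)
      · rw [gB, s_p i h] at e1c
        rw [gB', s_q i h] at e1c'
        exact hnf ⟨e1c', e1c⟩

lemma comm_of_cycle (hy : y * y = 1) (hyp : y ⟨i, by omega⟩ = ⟨i + 1, h⟩) :
    sP n i * y = y * sP n i := by
  have yy := invol_apply hy
  have hyq : y ⟨i + 1, h⟩ = ⟨i, by omega⟩ := by rw [← hyp, yy]
  apply Equiv.ext
  intro a
  simp only [Perm.mul_apply]
  by_cases h1 : a = (⟨i, by omega⟩ : Fin n)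
  · rw [h1, hyp, s_q i h, s_p i h, hyq]
  · by_cases h2 : a = (⟨i + 1, h⟩ : Fin n)
    · rw [h2, hyq, s_p i h, s_q i h, hyp]
    · have hv1 : a.val ≠ i := fun hc => h1 (Fin.ext hc)
      have hv2 : a.val ≠ i + 1 := fun hc => h2 (Fin.ext hc)
      rw [s_other i h a hv1 hv2]
      have hx1 : (y a).val ≠ i := by
        intro hc
        have : y a = ⟨i, by omega⟩ := Fin.ext hc
        exact h2 (by rw [← yy a, this, hyp])
      have hx2 : (y a).val ≠ i + 1 := by
        intro hc
        have : y a = ⟨i + 1, h⟩ := Fin.ext hc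
        exact h1 (by rw [← yy a, this, hyq])
      rw [s_other i h (y a) hx1 hx2]

set_option maxHeartbeats 1000000 in
lemma pred_comm (hy : y * y = 1) (hyp : y ⟨i, by omega⟩ = ⟨i + 1, h⟩) :
    (y * sP n i) * (y * sP n i) = 1 ∧ iStep (y * sP n i) i = y ∧
      mP y = mP (y * sP n i) + 2 := by
  have hcomm := comm_of_cycle i h y hy hyp
  have hskey : sP n i * (y * sP n i) = y := by
    rw [← mul_assoc, hcomm, mul_assoc, s_mul_self i h, mul_one]
  have hy' : (y * sP n i) * (y * sP n i) = 1 := by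
    rw [mul_assoc, hskey, hy]
  have hyq : y ⟨i + 1, h⟩ = ⟨i, by omega⟩ := by
    have e3 := invol_apply hy (⟨i, by omega⟩ : Fin n)
    rw [hyp] at e3
    exact e3
  have hfp : (y * sP n i) ⟨i, by omega⟩ = ⟨i, by omega⟩ := by
    rw [Perm.mul_apply, s_p i h, hyq]
  have hfq : (y * sP n i) ⟨i + 1, h⟩ = ⟨i + 1, h⟩ := by
    rw [Perm.mul_apply, s_q i h, hyp]
  obtain ⟨estep, emp, _⟩ := iStep_comm i h (y * sP n i) hy' hfp hfq
  have hys : (y * sP n i) * sP n i = y := by rw [mul_assoc, s_mul_self i h, mul_one]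
  rw [hys] at estep emp
  exact ⟨hy', estep, by omega⟩

set_option maxHeartbeats 1000000 in
lemma pred_conj (hy : y * y = 1) (hdy : y ⟨i + 1, h⟩ < y ⟨i, by omega⟩)
    (hypq : y ⟨i, by omega⟩ ≠ ⟨i + 1, h⟩) :
    (sP n i * y * sP n i) * (sP n i * y * sP n i) = 1 ∧ iStep (sP n i * y * sP n i) i = y ∧
      mP y = mP (sP n i * y * sP n i) + 2 := by
  have hy' : (sP n i * y * sP n i) * (sP n i * y * sP n i) = 1 := by
    have e1 : sP n i * y * sP n i * (sP n i * y * sP n i) =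
        sP n i * (y * ((sP n i * sP n i) * (y * sP n i))) := by
      simp only [mul_assoc]
    rw [e1, s_mul_self i h, one_mul, ← mul_assoc y y, hy, one_mul, s_mul_self i h]
  have mulapp : ∀ a : Fin n, (sP n i * y * sP n i) a = sP n i (y (sP n i a)) := by
    intro a
    simp only [Perm.mul_apply]
  have hasc' : (sP n i * y * sP n i) ⟨i, by omega⟩ < (sP n i * y * sP n i) ⟨i + 1, h⟩ := by
    rw [mulapp, mulapp, s_p i h, s_q i h]
    exact olt i h hdy (by rintro ⟨e1, e2⟩; exact hypq e2)
  have hnf' : ¬((sP n i * y * sP n i) ⟨i, by omega⟩ = (⟨i, by omega⟩ : Fin n) ∧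
      (sP n i * y * sP n i) ⟨i + 1, h⟩ = (⟨i + 1, h⟩ : Fin n)) := by
    rintro ⟨u1, u2⟩
    rw [mulapp, s_p i h] at u1
    rw [mulapp, s_q i h] at u2
    have v1 := u1
    have v2 := u2
    have w1 := congrArg (sP n i) v1
    have w2 := congrArg (sP n i) v2
    rw [s_invol i h, s_p i h] at w1
    rw [s_invol i h, s_q i h] at w2
    have d1 := Fin.lt_def.mp hdy
    have e1v : (y ⟨i + 1, h⟩).val = i + 1 := by rw [w1]
    have e2v : (y ⟨i, by omega⟩).val = i := by rw [w2]
    omega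
  obtain ⟨estep, emp, _⟩ := iStep_conj i h (sP n i * y * sP n i) hy' hasc' hnf'
  have hsys : sP n i * (sP n i * y * sP n i) * sP n i = y := by
    have e1 : sP n i * (sP n i * y * sP n i) * sP n i =
        (sP n i * sP n i) * y * (sP n i * sP n i) := by
      simp only [mul_assoc]
    rw [e1, s_mul_self i h, one_mul, mul_one]
  rw [hsys] at estep emp
  exact ⟨hy', estep, by omega⟩

end transfer

lemma iWord_concat (x : Perm (Fin n)) (l : List ℕ) (j : ℕ) :
    iWord x (l ++ [j]) = iStep (iWord x l) j := by
  simp [iWord, List.foldl_append]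

lemma wordProd_concat (l : List ℕ) (j : ℕ) :
    wordProdP n (l ++ [j]) = wordProdP n l * sP n j := by
  simp [wordProdP]

lemma lenP_wordProd_le (l : List ℕ) : lenP (wordProdP n l) ≤ l.length := by
  induction l using List.reverseRecOn with
  | nil => simp [wordProdP, lenP_one]
  | append_singleton L j ih =>
    rw [wordProd_concat]
    calc lenP (wordProdP n L * sP n j) ≤ lenP (wordProdP n L) + 1 := lenS_le j _
    _ ≤ L.length + 1 := by omega
    _ = (L ++ [j]).length := by simp

lemma iWord_one_invol_bound (l : List ℕ) :
    (iWord (1 : Perm (Fin n)) l) * (iWord 1 l) = 1 ∧ mP (iWord (1 : Perm (Fin n)) l) ≤ 2 * l.length := by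
  induction l using List.reverseRecOn with
  | nil => exact ⟨by simp [iWord], by simp [iWord, mP_one]⟩
  | append_singleton L j ih =>
    rw [iWord_concat]
    obtain ⟨h1, h2⟩ := iStep_invol_bound (iWord 1 L) j ih.1
    refine ⟨h1, ?_⟩
    simp only [List.length_append, List.length_singleton]
    omega

lemma exists_conds (y : Perm (Fin n)) (hy : y * y = 1) : ∃ w : Perm (Fin n), Conds w y := by
  classical
  have yy := invol_apply hy
  set κ : Fin n → ℕ := fun t => 2 * min t.val (y t).val + (if t < y t then 1 else 0) with hκ
  have κinj : Function.Injective κ := by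
    intro t u e
    simp only [hκ] at e
    by_cases ht : t < y t <;> by_cases hu : u < y u <;> simp only [ht, hu, if_pos, if_neg,
      if_true, if_false] at e
    · have m1 : min t.val (y t).val = t.val := Nat.min_eq_left (le_of_lt (Fin.lt_def.mp ht))
      have m2 : min u.val (y u).val = u.val := Nat.min_eq_left (le_of_lt (Fin.lt_def.mp hu))
      rw [m1, m2] at e
      exact Fin.ext (by omega)
    · have m1 : min t.val (y t).val = t.val := Nat.min_eq_left (le_of_lt (Fin.lt_def.mp ht))
      have m2 : min u.val (y u).val = (y u).val := Nat.min_eq_right (Fin.le_def.mp (not_lt.mp hu))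
      rw [m1, m2] at e
      omega
    · have m1 : min t.val (y t).val = (y t).val := Nat.min_eq_right (Fin.le_def.mp (not_lt.mp ht))
      have m2 : min u.val (y u).val = u.val := Nat.min_eq_left (le_of_lt (Fin.lt_def.mp hu))
      rw [m1, m2] at e
      omega
    · have m1 : min t.val (y t).val = (y t).val := Nat.min_eq_right (Fin.le_def.mp (not_lt.mp ht))
      have m2 : min u.val (y u).val = (y u).val := Nat.min_eq_right (Fin.le_def.mp (not_lt.mp hu))
      rw [m1, m2] at e
      have : y t = y u := Fin.ext (by omega)
      exact y.injective this
  have hb : ∀ t : Fin n, (Finset.univ.filter fun u => κ u < κ t).card < n := by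
    intro t
    have hsub : (Finset.univ.filter fun u => κ u < κ t) ⊆ Finset.univ.erase t := by
      intro u hu
      simp only [Finset.mem_filter] at hu
      rw [Finset.mem_erase]
      refine ⟨?_, Finset.mem_univ u⟩
      intro e
      rw [e] at hu
      exact absurd hu.2 (lt_irrefl _)
    have := Finset.card_le_card hsub
    rw [Finset.card_erase_of_mem (Finset.mem_univ t), Finset.card_univ, Fintype.card_fin] at this
    have hn : 0 < n := t.pos
    omega
  set f : Fin n → Fin n := fun t => ⟨(Finset.univ.filter fun u => κ u < κ t).card, hb t⟩ with hf
  have mono : ∀ t u : Fin n, κ t < κ u → f t < f u := by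
    intro t u htu
    have hss : (Finset.univ.filter fun v => κ v < κ t) ⊂ (Finset.univ.filter fun v => κ v < κ u) := by
      constructor
      · intro v hv
        simp only [Finset.mem_filter, Finset.mem_univ, true_and] at hv ⊢
        omega
      · intro hcon
        have : t ∈ (Finset.univ.filter fun v => κ v < κ t) := by
          apply hcon
          simp only [Finset.mem_filter, Finset.mem_univ, true_and]
          exact htu
        simp only [Finset.mem_filter] at this
        exact absurd this.2 (lt_irrefl _)
    exact Fin.lt_def.mpr (Finset.card_lt_card hss)
  have finj : Function.Injective f := by
    intro t u e
    by_contra hne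
    rcases lt_trichotomy (κ t) (κ u) with h1 | h1 | h1
    · exact absurd (e ▸ mono t u h1) (lt_irrefl _)
    · exact hne (κinj h1)
    · exact absurd (e ▸ mono u t h1) (lt_irrefl _)
  obtain ⟨g, hg⟩ : ∃ g : Perm (Fin n), ∀ t, g t = f t := by
    refine ⟨Equiv.ofBijective f (Finite.injective_iff_bijective.mp finj), fun t => rfl⟩
  have glt : ∀ t u : Fin n, g t < g u ↔ κ t < κ u := by
    intro t u
    constructor
    · intro hw
      rcases lt_trichotomy (κ t) (κ u) with h1 | h1 | h1
      · exact h1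
      · rw [κinj h1] at hw
        exact absurd hw (lt_irrefl _)
      · rw [hg, hg] at hw
        exact absurd (lt_trans hw (mono u t h1)) (lt_irrefl _)
    · intro h1
      rw [hg, hg]
      exact mono t u h1
  have gle : ∀ t u : Fin n, κ t ≤ κ u → g t ≤ g u := by
    intro t u h1
    rcases lt_or_eq_of_le h1 with h2 | h2
    · exact le_of_lt ((glt t u).mpr h2)
    · rw [κinj h2]
  have cycb : ∀ a b : Fin n, a ≤ b → y a = b → κ b = 2 * a.val := by
    intro a b hab e
    have e2 : y b = a := by rw [← e, yy]
    simp only [hκ]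
    rw [e2, if_neg (not_lt.mpr hab)]
    have hv := Fin.le_def.mp hab
    omega
  have cyca : ∀ a b : Fin n, a ≤ b → y a = b → 2 * a.val ≤ κ a ∧ κ a ≤ 2 * a.val + 1 := by
    intro a b hab e
    simp only [hκ, e]
    have hv := Fin.le_def.mp hab
    split_ifs <;> omega
  refine ⟨g, ?_, ?_, ?_⟩
  · intro a b hab e
    apply gle
    rw [cycb a b hab e]
    exact (cyca a b hab e).1
  · intro a b hab e t h1 h2 hv
    have k1 := (glt b t).mp hv.1
    have k2 := (glt t a).mp hv.2
    rw [cycb a b hab e] at k1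
    have := (cyca a b hab e).2
    omega
  · intro a b a' b' hab e ha'b' e2 h1 h2
    refine ⟨?_, ?_, ?_⟩
    · apply gle
      rw [cycb a b hab e]
      exact (cyca a b hab e).1
    · apply (glt a b').mpr
      rw [cycb a' b' ha'b' e2]
      have := (cyca a b hab e).2
      have hv := Fin.lt_def.mp h1
      omega
    · apply gle
      rw [cycb a' b' ha'b' e2]
      exact (cyca a' b' ha'b' e2).1

set_option maxHeartbeats 2000000 in
lemma thm1 : ∀ (k : ℕ) (w y : Perm (Fin n)), lenP w = k → y * y = 1 → Conds w y →
    w ∈ HeckeP n 1 y ∧ 2 * lenP w = mP y := by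
  intro k
  induction k using Nat.strong_induction_on with
  | _ k ih =>
  intro w y hk hy hc
  by_cases hw : w = 1
  · subst hw
    have hy1 : y = 1 := by
      apply Equiv.ext
      intro a
      simp only [Perm.one_apply]
      rcases le_or_gt a (y a) with h1 | h1
      · have h2 := hc.1 a (y a) h1 rfl
        simp only [Perm.one_apply] at h2
        exact le_antisymm h2 h1
      · have h2 := hc.1 (y a) a (le_of_lt h1) (invol_apply hy a)
        simp only [Perm.one_apply] at h2
        exact absurd h2 (not_le_of_gt h1)
    subst hy1
    refine ⟨⟨[], by simp [wordProdP], ?_, rfl⟩, ?_⟩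
    · show lenP (wordProdP n []) = ([] : List ℕ).length
      simp [wordProdP, lenP_one]
    · rw [lenP_one, mP_one]
  · obtain ⟨i, h, hd⟩ := exists_descent w hw
    have hlen : lenP w = lenP (w * sP n i) + 1 := lenS_desc i h w hd
    by_cases hyp : y ⟨i, by omega⟩ = ⟨i + 1, h⟩
    · -- commuting case
      obtain ⟨hy', estep, emp⟩ := pred_comm i h y hy hyp
      have hc' := T2 i h w y hy hc hd hyp
      obtain ⟨hmem, hmp⟩ := ih (lenP (w * sP n i)) (by omega) (w * sP n i) (y * sP n i)
        rfl hy' hc'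
      obtain ⟨l, hl1, hl2, hl3⟩ := hmem
      have hl2' : lenP (w * sP n i) = l.length := by rw [← hl1]; exact hl2
      refine ⟨⟨l ++ [i], ?_, ?_, ?_⟩, ?_⟩
      · rw [wordProd_concat, hl1, mul_assoc, s_mul_self i h, mul_one]
      · show lenP (wordProdP n (l ++ [i])) = (l ++ [i]).length
        rw [wordProd_concat, hl1, mul_assoc, s_mul_self i h, mul_one]
        simp only [List.length_append, List.length_singleton]
        omega
      · rw [iWord_concat, hl3, estep]
      · omega
    · -- conjugation case
      have hdy := descent_forces i h w y hy hc hd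
      obtain ⟨hy', estep, emp⟩ := pred_conj i h y hy hdy hyp
      have hc' := T3 i h w y hy hc hd hdy hyp
      obtain ⟨hmem, hmp⟩ := ih (lenP (w * sP n i)) (by omega) (w * sP n i)
        (sP n i * y * sP n i) rfl hy' hc'
      obtain ⟨l, hl1, hl2, hl3⟩ := hmem
      have hl2' : lenP (w * sP n i) = l.length := by rw [← hl1]; exact hl2
      refine ⟨⟨l ++ [i], ?_, ?_, ?_⟩, ?_⟩
      · rw [wordProd_concat, hl1, mul_assoc, s_mul_self i h, mul_one]
      · show lenP (wordProdP n (l ++ [i])) = (l ++ [i]).length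
        rw [wordProd_concat, hl1, mul_assoc, s_mul_self i h, mul_one]
        simp only [List.length_append, List.length_singleton]
        omega
      · rw [iWord_concat, hl3, estep]
      · omega

lemma conds_one_one : Conds (1 : Perm (Fin n)) 1 := by
  refine ⟨?_, ?_, ?_⟩
  · intro a b hab e
    simp only [Perm.one_apply] at e ⊢
    rw [e]
  · intro a b hab e t h1 h2 hv
    simp only [Perm.one_apply] at e
    rw [← e] at h2
    exact absurd (lt_trans h1 h2) (lt_irrefl _)
  · intro a b a' b' hab e ha'b' e2 h1 h2
    simp only [Perm.one_apply] at e e2 ⊢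
    rw [← e, ← e2]
    exact ⟨le_refl _, h1, le_refl _⟩

set_option maxHeartbeats 2000000 in
lemma thm3 : ∀ (k : ℕ) (l : List ℕ) (y : Perm (Fin n)), l.length = k → ReducedWordP n l →
    iWord 1 l = y → 2 * lenP (wordProdP n l) = mP y → Conds (wordProdP n l) y := by
  intro k
  induction k using Nat.strong_induction_on with
  | _ k ih =>
  intro l y hk hred hiw hmp
  rcases List.eq_nil_or_concat l with rfl | ⟨L, j, rfl⟩
  · have : y = 1 := by rw [← hiw]; rfl
    subst this
    have : wordProdP n ([] : List ℕ) = 1 := by simp [wordProdP]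
    rw [this]
    exact conds_one_one
  · simp only [List.concat_eq_append] at hk hred hiw hmp ⊢
    have hkk : L.length + 1 = k := by simpa using hk
    have hlenL : lenP (wordProdP n L) ≤ L.length := lenP_wordProd_le L
    have hredlen : lenP (wordProdP n (L ++ [j])) = L.length + 1 := by
      rw [hred]; simp
    have hle : lenP (wordProdP n L * sP n j) ≤ lenP (wordProdP n L) + 1 := lenS_le j _
    rw [wordProd_concat] at hredlen
    by_cases hr : j + 1 < n
    · have hWlen : lenP (wordProdP n L) = L.length := by omega
      have hredL : ReducedWordP n L := hWlen
      have hstep : lenP (wordProdP n L * sP n j) = lenP (wordProdP n L) + 1 := by omega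
      -- ascent of w' at j
      have hwasc : wordProdP n L ⟨j, by omega⟩ < wordProdP n L ⟨j + 1, hr⟩ := by
        rcases lt_trichotomy (wordProdP n L ⟨j, by omega⟩) (wordProdP n L ⟨j + 1, hr⟩)
          with h1 | h1 | h1
        · exact h1
        · exact absurd ((wordProdP n L).injective h1) (by simp [Fin.ext_iff])
        · have := lenS_desc j hr (wordProdP n L) h1
          omega
      obtain ⟨hy', hbd⟩ := iWord_one_invol_bound (n := n) L
      have hiw' : iStep (iWord 1 L) j = y := by rw [← iWord_concat]; exact hiw
      have hmp' : 2 * lenP (wordProdP n (L ++ [j])) = mP y := hmp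
      rw [wordProd_concat] at hmp'
      -- y' ascent
      have hyasc : iWord (1 : Perm (Fin n)) L ⟨j, by omega⟩ < iWord 1 L ⟨j + 1, hr⟩ := by
        rcases lt_trichotomy (iWord (1 : Perm (Fin n)) L ⟨j, by omega⟩)
          (iWord 1 L ⟨j + 1, hr⟩) with h1 | h1 | h1
        · exact h1
        · exact absurd ((iWord 1 L).injective h1) (by simp [Fin.ext_iff])
        · exfalso
          have htriv := iStep_desc j hr (iWord 1 L) h1
          rw [htriv] at hiw'
          rw [hiw'] at hbd
          omega
      by_cases hf : iWord (1 : Perm (Fin n)) L ⟨j, by omega⟩ = (⟨j, by omega⟩ : Fin n) ∧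
          iWord (1 : Perm (Fin n)) L ⟨j + 1, hr⟩ = (⟨j + 1, hr⟩ : Fin n)
      · obtain ⟨estep, emp, _⟩ := iStep_comm j hr (iWord 1 L) hy' hf.1 hf.2
        rw [estep] at hiw'
        have hmpL : 2 * lenP (wordProdP n L) = mP (iWord (1 : Perm (Fin n)) L) := by
          rw [← hiw', emp] at hmp'
          omega
        have hcL := ih L.length (by omega) L (iWord 1 L) rfl hredL rfl hmpL
        have := T2' j hr (wordProdP n L) (iWord 1 L) hy' hcL hwasc hf.1 hf.2
        rw [hiw'] at this
        rw [wordProd_concat]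
        exact this
      · obtain ⟨estep, emp, _⟩ := iStep_conj j hr (iWord 1 L) hy' hyasc hf
        rw [estep] at hiw'
        have hmpL : 2 * lenP (wordProdP n L) = mP (iWord (1 : Perm (Fin n)) L) := by
          rw [← hiw', emp] at hmp'
          omega
        have hcL := ih L.length (by omega) L (iWord 1 L) rfl hredL rfl hmpL
        have := T3' j hr (wordProdP n L) (iWord 1 L) hy' hcL hwasc hyasc hf
        rw [hiw'] at this
        rw [wordProd_concat]
        exact this
    · exfalso
      rw [sP_out j hr, mul_one] at hredlen
      omega

end CJW

/-- Can–Joyce–Wyser.  For an involution `y ∈ I(S_n)` and `w ∈ S_n`,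
`w ∈ A(y) = A(1, y)` iff: (a) `w(b) ≤ w(a)` for `(a,b) ∈ Cyc(y)`; (b) no `t` with
`a < t < b` has `w(b) < w(t) < w(a)`; and (c) if `(a,b), (a',b') ∈ Cyc(y)` with `a < a'` and
`b < b'`, then `w(b) ≤ w(a) < w(b') ≤ w(a')`. -/
theorem mem_atoms_one_iff {n : ℕ} (y : Equiv.Perm (Fin n)) (hy : y * y = 1)
    (w : Equiv.Perm (Fin n)) :
    w ∈ AtomsP n 1 y ↔
      ((∀ a b : Fin n, a ≤ b → y a = b → w b ≤ w a) ∧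
       (∀ a b : Fin n, a ≤ b → y a = b →
          ∀ t : Fin n, a < t → t < b → ¬ (w b < w t ∧ w t < w a)) ∧
       (∀ a b a' b' : Fin n, a ≤ b → y a = b → a' ≤ b' → y a' = b' → a < a' → b < b' →
          w b ≤ w a ∧ w a < w b' ∧ w b' ≤ w a')) := by

  constructor
  · rintro ⟨hmem, hmin⟩
    obtain ⟨w₀, hw₀⟩ := CJW.exists_conds y hy
    obtain ⟨hm₀, hl₀⟩ := CJW.thm1 (lenP w₀) w₀ y rfl hy hw₀
    obtain ⟨l, hl1, hl2, hl3⟩ := hmem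
    have hbound := (CJW.iWord_one_invol_bound (n := n) l).2
    rw [hl3] at hbound
    have hlw : lenP w = l.length := by rw [← hl1]; exact hl2
    have h1 : lenP w ≤ lenP w₀ := hmin w₀ hm₀
    have heq : 2 * lenP (wordProdP n l) = CJW.mP y := by rw [hl1]; omega
    have hres := CJW.thm3 l.length l y rfl hl2 hl3 heq
    rw [hl1] at hres
    exact hres
  · intro hc
    obtain ⟨hmem, hlen⟩ := CJW.thm1 (lenP w) w y rfl hy hc
    refine ⟨hmem, ?_⟩
    intro v hv
    obtain ⟨l, g1, g2, g3⟩ := hv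
    have hbound := (CJW.iWord_one_invol_bound (n := n) l).2
    rw [g3] at hbound
    have hlv : lenP v = l.length := by rw [← g1]; exact g2
    omega
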